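/- No bad gradients from the mesa construction: Let ℓ = 1/N for some positive integer N, let Γ ≥ 6/ℓ, let G = {0, ℓ, 2ℓ, …, 1−ℓ, 1}², and for every p ∈ G let A^p = (a_c^p, a_r^p, a_t^p, a_l^p, a_b^p) ∈ [0.4, 0.6]⁵ and g^p ∈ [−0.01, 0.01]². Assume that for all p, p' ∈ G with ‖p − p'‖_∞ ≤ ℓ: (1) ‖g^p − g^{p'}‖_∞ ≤ ℓ, and (2) for all i, j ∈ {c, r, t, l, b}, |a_i^{p'} − a_j^p − ⟨2g^p, p' − p⟩| ≤ ℓ². Define f : [0,1]² → ℝ by f(x) = max_{p ∈ G} M(x; p, A^p, g^p). Then for any p ∈ G and any x ∈ [0,1]² with ‖x − p‖_∞ ≤ ℓ/2 at which f is differentiable: if g₁^p ≥ 10ℓ then ∂f/∂x₁(x) ≥ g₁^p − ℓ; if g₁^p ≤ −10ℓ then ∂f/∂x₁(x) ≤ g₁^p + ℓ; if g₂^p ≥ 10ℓ then ∂f/∂x₂(x) ≥ g₂^p − ℓ; and if g₂^p ≤ −10ℓ then ∂f/∂x₂(x) ≤ g₂^p + ℓ. -/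

import Mathlib

noncomputable section

/-- The central affine piece of a mesa. -/
def Pc (p : ℝ × ℝ) (a : ℝ) (g : ℝ × ℝ) (x : ℝ × ℝ) : ℝ :=
  (x.1 - p.1) * g.1 + (x.2 - p.2) * g.2 + a

/-- The right affine piece of a mesa. -/
def Pr (ℓ Γ : ℝ) (p : ℝ × ℝ) (a : ℝ) (g : ℝ × ℝ) (x : ℝ × ℝ) : ℝ :=
  (x.1 - p.1) * (-Γ + g.1) + (x.2 - p.2) * g.2 + a + Γ * ℓ / 2

/-- The top affine piece of a mesa. -/
def Pt (ℓ Γ : ℝ) (p : ℝ × ℝ) (a : ℝ) (g : ℝ × ℝ) (x : ℝ × ℝ) : ℝ :=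
  (x.1 - p.1) * g.1 + (x.2 - p.2) * (-Γ + g.2) + a + Γ * ℓ / 2

/-- The left affine piece of a mesa. -/
def Pl (ℓ Γ : ℝ) (p : ℝ × ℝ) (a : ℝ) (g : ℝ × ℝ) (x : ℝ × ℝ) : ℝ :=
  (x.1 - p.1) * (Γ + g.1) + (x.2 - p.2) * g.2 + a + Γ * ℓ / 2

/-- The bottom affine piece of a mesa. -/
def Pb (ℓ Γ : ℝ) (p : ℝ × ℝ) (a : ℝ) (g : ℝ × ℝ) (x : ℝ × ℝ) : ℝ :=
  (x.1 - p.1) * g.1 + (x.2 - p.2) * (Γ + g.2) + a + Γ * ℓ / 2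

/-- The mesa function with center `p`, values `A` (indexed `0 = c, 1 = r, 2 = t, 3 = l, 4 = b`)
and gradient `g`: the minimum of the five affine pieces. -/
def mesa (ℓ Γ : ℝ) (p : ℝ × ℝ) (A : Fin 5 → ℝ) (g : ℝ × ℝ) (x : ℝ × ℝ) : ℝ :=
  min (Pc p (A 0) g x)
    (min (Pr ℓ Γ p (A 1) g x) (min (Pt ℓ Γ p (A 2) g x) (min (Pl ℓ Γ p (A 3) g x) (Pb ℓ Γ p (A 4) g x))))

/-- The index set of the grid `{0, ℓ, 2ℓ, …, 1}²` where `ℓ = 1/N`. -/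
def grid (N : ℕ) : Finset (ℕ × ℕ) := Finset.range (N + 1) ×ˢ Finset.range (N + 1)

/-- The grid point corresponding to an index pair. -/
def pt (ℓ : ℝ) (k : ℕ × ℕ) : ℝ × ℝ := ((k.1 : ℝ) * ℓ, (k.2 : ℝ) * ℓ)

theorem grid_nonempty (N : ℕ) : (grid N).Nonempty :=
  ⟨(0, 0), by simp [grid]⟩


open Filter Set Topology


lemma deriv_ge {f : ℝ × ℝ → ℝ} {x e : ℝ × ℝ} {D : ℝ × ℝ →L[ℝ] ℝ}
    (hD : HasFDerivAt f D x) {c δ : ℝ} (hδ : 0 < δ)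
    (h : ∀ t : ℝ, 0 < t → t < δ → f x + c * t ≤ f (x + t • e)) : c ≤ D e := by
  have h1 : HasDerivAt (fun t : ℝ => x + t • e) e 0 := by
    simpa using ((hasDerivAt_id (0:ℝ)).smul_const e).const_add x
  have hD' : HasFDerivAt f D ((fun t : ℝ => x + t • e) 0) := by simpa using hD
  have hφ : HasDerivAt (fun t : ℝ => f (x + t • e)) (D e) 0 := hD'.comp_hasDerivAt 0 h1
  rw [hasDerivAt_iff_tendsto_slope] at hφ
  have hφ' : Tendsto (slope (fun t : ℝ => f (x + t • e)) 0) (𝓝[>] 0) (𝓝 (D e)) :=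
    hφ.mono_left (nhdsWithin_mono _ (fun y hy => ne_of_gt hy))
  refine ge_of_tendsto hφ' ?_
  filter_upwards [Ioo_mem_nhdsGT_of_mem (⟨le_refl _, hδ⟩ : (0:ℝ) ∈ Ico 0 δ)] with t ht
  have ht0 : 0 < t := ht.1
  have h2 := h t ht.1 ht.2
  have h0 : f (x + (0:ℝ) • e) = f x := by simp
  rw [slope_def_field, h0, sub_zero, le_div_iff₀ ht0]
  linarith

lemma mul_ge_of_abs {a b A B : ℝ} (ha : |a| ≤ A) (hb : |b| ≤ B) : -(A*B) ≤ a*b := by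
  have h1 : |a*b| ≤ A*B := by
    rw [abs_mul]
    exact mul_le_mul ha hb (abs_nonneg b) ((abs_nonneg a).trans ha)
  linarith [neg_abs_le (a*b)]

lemma core_pos {ℓ Γ u₁ γ₁ b0 b1 : ℝ} (hl : 0 < ℓ) (hl9 : ℓ ≤ 1/900)
    (hΓl : 6 ≤ Γ * ℓ) (hb10 : |b1 - b0| ≤ ℓ^2)
    (hPc : u₁*(-Γ+γ₁) + b1 + Γ*ℓ/2 ≤ u₁*γ₁ + b0) : ℓ/3 ≤ u₁ := by
  by_contra hcon
  push_neg at hcon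
  have hΓ : 0 < Γ := by nlinarith
  have h1 : Γ*(ℓ/2 - u₁) ≤ ℓ^2 := by
    have := abs_le.1 hb10
    nlinarith
  nlinarith [mul_pos hΓ (show (0:ℝ) < ℓ/3 - u₁ by linarith), sq_nonneg ℓ]

lemma core_main {ℓ Γ u₁ u₂ γ₁ γ₂ δ₁ δ₂ gk b0 b1 b2 b3 b4 c0 c1 c2 c3 c4 : ℝ}
    (hl : 0 < ℓ) (hl9 : ℓ ≤ 1/900)
    (hΓl : 6 ≤ Γ * ℓ)
    (hu1 : |u₁| ≤ 3*ℓ/2) (hu2 : |u₂| ≤ 3*ℓ/2)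
    (hgk : 10*ℓ ≤ gk) (hγ1k : |γ₁ - gk| ≤ ℓ)
    (hd1 : |δ₁ - γ₁| ≤ ℓ) (hd2 : |δ₂ - γ₂| ≤ ℓ)
    (hb10 : |b1 - b0| ≤ ℓ^2)
    (hc0 : |c0 - b0 - 2*γ₁*ℓ| ≤ ℓ^2) (hc1 : |c1 - b1 - 2*γ₁*ℓ| ≤ ℓ^2)
    (hc2 : |c2 - b2 - 2*γ₁*ℓ| ≤ ℓ^2) (hc3 : |c3 - b1 - 2*γ₁*ℓ| ≤ ℓ^2)
    (hc4 : |c4 - b4 - 2*γ₁*ℓ| ≤ ℓ^2)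
    (hPc : u₁*(-Γ+γ₁) + b1 + Γ*ℓ/2 ≤ u₁*γ₁ + b0)
    (hPt : u₁*(-Γ+γ₁) + u₂*γ₂ + b1 ≤ u₁*γ₁ + u₂*(-Γ+γ₂) + b2)
    (hPb : u₁*(-Γ+γ₁) + u₂*γ₂ + b1 ≤ u₁*γ₁ + u₂*(Γ+γ₂) + b4) :
    u₁*(-Γ+γ₁) + u₂*γ₂ + b1 + Γ*ℓ/2 < (u₁-ℓ)*δ₁ + u₂*δ₂ + c0 ∧
    u₁*(-Γ+γ₁) + u₂*γ₂ + b1 + Γ*ℓ/2 < (u₁-ℓ)*(-Γ+δ₁) + u₂*δ₂ + c1 + Γ*ℓ/2 ∧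
    u₁*(-Γ+γ₁) + u₂*γ₂ + b1 + Γ*ℓ/2 < (u₁-ℓ)*δ₁ + u₂*(-Γ+δ₂) + c2 + Γ*ℓ/2 ∧
    u₁*(-Γ+γ₁) + u₂*γ₂ + b1 + Γ*ℓ/2 < (u₁-ℓ)*(Γ+δ₁) + u₂*δ₂ + c3 + Γ*ℓ/2 ∧
    u₁*(-Γ+γ₁) + u₂*γ₂ + b1 + Γ*ℓ/2 < (u₁-ℓ)*δ₁ + u₂*(Γ+δ₂) + c4 + Γ*ℓ/2 := by
  have hγ1 : 9*ℓ ≤ γ₁ := by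
    have := abs_le.1 hγ1k; linarith
  have P1 : -(3*ℓ/2*ℓ) ≤ u₁*(δ₁-γ₁) := mul_ge_of_abs hu1 hd1
  have P2 : -(3*ℓ/2*ℓ) ≤ u₂*(δ₂-γ₂) := mul_ge_of_abs hu2 hd2
  have P3 : ℓ*δ₁ ≤ ℓ*(γ₁+ℓ) := by
    have : δ₁ ≤ γ₁ + ℓ := by have := abs_le.1 hd1; linarith
    nlinarith
  have P4 : 9*(ℓ*ℓ) ≤ ℓ*γ₁ := by nlinarith
  have hsq : ℓ^2 = ℓ*ℓ := sq ℓ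
  have e0 := abs_le.1 hc0
  have e1 := abs_le.1 hc1
  have e2 := abs_le.1 hc2
  have e3 := abs_le.1 hc3
  have e4 := abs_le.1 hc4
  have eb := abs_le.1 hb10
  have hll : 0 < ℓ*ℓ := mul_pos hl hl
  refine ⟨by linarith, by linarith, by linarith, by linarith, by linarith⟩

lemma mem_grid {N : ℕ} {m : ℕ × ℕ} (hm : m ∈ grid N) : m.1 ≤ N ∧ m.2 ≤ N := by
  simp only [grid, Finset.mem_product, Finset.mem_range, Nat.lt_succ_iff] at hm
  exact hm

lemma norm_coords {v : ℝ × ℝ} {r : ℝ} (h : ‖v‖ ≤ r) : |v.1| ≤ r ∧ |v.2| ≤ r := by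
  rw [Prod.norm_def] at h
  simp only [Real.norm_eq_abs] at h
  exact ⟨(le_max_left _ _).trans h, (le_max_right _ _).trans h⟩

lemma mul_le_of_abs {a b A B : ℝ} (ha : |a| ≤ A) (hb : |b| ≤ B) : a*b ≤ A*B := by
  have h1 : |a*b| ≤ A*B := by
    rw [abs_mul]
    exact mul_le_mul ha hb (abs_nonneg b) ((abs_nonneg a).trans ha)
  linarith [le_abs_self (a*b)]

/-- lower bound on the own mesa -/
lemma mesa_lb {ℓ Γ : ℝ} {p : ℝ × ℝ} {a : Fin 5 → ℝ} {g : ℝ × ℝ} {x : ℝ × ℝ}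
    (hl : 0 < ℓ) (hl1 : ℓ ≤ 1) (hΓ : 0 ≤ Γ)
    (ha : ∀ i, a i ∈ Set.Icc (0.4:ℝ) 0.6)
    (hg1 : |g.1| ≤ 0.01) (hg2 : |g.2| ≤ 0.01)
    (h1 : |x.1 - p.1| ≤ ℓ/2) (h2 : |x.2 - p.2| ≤ ℓ/2) :
    (39:ℝ)/100 ≤ mesa ℓ Γ p a g x := by
  have hg1' := abs_le.1 hg1
  have hg2' := abs_le.1 hg2
  norm_num at hg1' hg2'
  have hg1'' : |g.1| ≤ 1/100 := by rw [abs_le]; constructor <;> linarith [hg1'.1, hg1'.2]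
  have hg2'' : |g.2| ≤ 1/100 := by rw [abs_le]; constructor <;> linarith [hg2'.1, hg2'.2]
  have k1 : -(ℓ/2 * (1/100)) ≤ (x.1-p.1)*g.1 := mul_ge_of_abs h1 hg1''
  have k2 : -(ℓ/2 * (1/100)) ≤ (x.2-p.2)*g.2 := mul_ge_of_abs h2 hg2''
  have habs1 : |(-Γ) + g.1| ≤ Γ + 1/100 := by
    rw [abs_le]; constructor <;> linarith [hg1'.1, hg1'.2]
  have habs2 : |Γ + g.1| ≤ Γ + 1/100 := by
    rw [abs_le]; constructor <;> linarith [hg1'.1, hg1'.2]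
  have habs3 : |(-Γ) + g.2| ≤ Γ + 1/100 := by
    rw [abs_le]; constructor <;> linarith [hg2'.1, hg2'.2]
  have habs4 : |Γ + g.2| ≤ Γ + 1/100 := by
    rw [abs_le]; constructor <;> linarith [hg2'.1, hg2'.2]
  have k3 : -(ℓ/2 * (Γ+1/100)) ≤ (x.1-p.1)*(-Γ+g.1) := mul_ge_of_abs h1 habs1
  have k4 : -(ℓ/2 * (Γ+1/100)) ≤ (x.1-p.1)*(Γ+g.1) := mul_ge_of_abs h1 habs2
  have k5 : -(ℓ/2 * (Γ+1/100)) ≤ (x.2-p.2)*(-Γ+g.2) := mul_ge_of_abs h2 habs3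
  have k6 : -(ℓ/2 * (Γ+1/100)) ≤ (x.2-p.2)*(Γ+g.2) := mul_ge_of_abs h2 habs4
  have ha0 := (ha 0).1; have ha1 := (ha 1).1; have ha2 := (ha 2).1
  have ha3 := (ha 3).1; have ha4 := (ha 4).1
  norm_num at ha0 ha1 ha2 ha3 ha4
  unfold mesa Pc Pr Pt Pl Pb
  refine le_min (by linarith) (le_min (by linarith) (le_min (by linarith)
    (le_min (by linarith) (by linarith))))

/-- a far mesa is small -/
lemma mesa_far {ℓ Γ : ℝ} {p : ℝ × ℝ} {a : Fin 5 → ℝ} {g : ℝ × ℝ} {x : ℝ × ℝ}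
    (hl : 0 < ℓ) (hl1 : ℓ ≤ 1) (hΓ : 6 ≤ Γ * ℓ)
    (ha : ∀ i, a i ∈ Set.Icc (0.4:ℝ) 0.6)
    (hg1 : |g.1| ≤ 0.01) (hg2 : |g.2| ≤ 0.01)
    (hb1 : |x.1 - p.1| ≤ 1) (hb2 : |x.2 - p.2| ≤ 1)
    (hfar : 3*ℓ/2 ≤ |x.1 - p.1| ∨ 3*ℓ/2 ≤ |x.2 - p.2|) :
    mesa ℓ Γ p a g x < (39:ℝ)/100 := by
  have hg1' := abs_le.1 hg1
  have hg2' := abs_le.1 hg2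
  norm_num at hg1' hg2'
  have hg1'' : |g.1| ≤ 1/100 := by rw [abs_le]; constructor <;> linarith [hg1'.1, hg1'.2]
  have hg2'' : |g.2| ≤ 1/100 := by rw [abs_le]; constructor <;> linarith [hg2'.1, hg2'.2]
  have hΓ0 : (0:ℝ) < Γ := by nlinarith
  have hΓ6 : (6:ℝ) ≤ Γ := by nlinarith [mul_le_mul_of_nonneg_left hl1 hΓ0.le]
  have ha1 := (ha 1).2; have ha2 := (ha 2).2
  have ha3 := (ha 3).2; have ha4 := (ha 4).2
  norm_num at ha1 ha2 ha3 ha4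
  have hpos : (0:ℝ) ≤ 3*ℓ/2 := by linarith
  have m1 : mesa ℓ Γ p a g x ≤ Pr ℓ Γ p (a 1) g x :=
    (min_le_right _ _).trans (min_le_left _ _)
  have m2 : mesa ℓ Γ p a g x ≤ Pt ℓ Γ p (a 2) g x :=
    (min_le_right _ _).trans ((min_le_right _ _).trans (min_le_left _ _))
  have m3 : mesa ℓ Γ p a g x ≤ Pl ℓ Γ p (a 3) g x :=
    (min_le_right _ _).trans ((min_le_right _ _).trans ((min_le_right _ _).trans (min_le_left _ _)))
  have m4 : mesa ℓ Γ p a g x ≤ Pb ℓ Γ p (a 4) g x :=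
    (min_le_right _ _).trans ((min_le_right _ _).trans ((min_le_right _ _).trans (min_le_right _ _)))
  rcases hfar with hfar | hfar
  · rcases le_abs.1 hfar with hs | hs
    · -- x.1 - p.1 ≥ 3ℓ/2 : use Pr
      refine lt_of_le_of_lt m1 ?_
      unfold Pr
      have key : (x.1-p.1)*(-Γ+g.1) ≤ 3*ℓ/2*(-Γ+1/100) :=
        le_trans (mul_le_mul_of_nonpos_right hs (by linarith))
          (mul_le_mul_of_nonneg_left (by linarith [hg1'.2]) hpos)
      linarith [mul_le_of_abs hb2 hg2'']
    · -- x.1 - p.1 ≤ -3ℓ/2 : use Pl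
      refine lt_of_le_of_lt m3 ?_
      unfold Pl
      have key : (x.1-p.1)*(Γ+g.1) ≤ (-(3*ℓ/2))*(Γ-1/100) := by
        have h1 : (x.1-p.1)*(Γ+g.1) ≤ (-(3*ℓ/2))*(Γ+g.1) :=
          mul_le_mul_of_nonneg_right (by linarith) (by linarith [hg1'.1])
        nlinarith [hg1'.1]
      linarith [mul_le_of_abs hb2 hg2'']
  · rcases le_abs.1 hfar with hs | hs
    · refine lt_of_le_of_lt m2 ?_
      unfold Pt
      have key : (x.2-p.2)*(-Γ+g.2) ≤ 3*ℓ/2*(-Γ+1/100) :=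
        le_trans (mul_le_mul_of_nonpos_right hs (by linarith))
          (mul_le_mul_of_nonneg_left (by linarith [hg2'.2]) hpos)
      linarith [mul_le_of_abs hb1 hg1'']
    · refine lt_of_le_of_lt m4 ?_
      unfold Pb
      have key : (x.2-p.2)*(Γ+g.2) ≤ (-(3*ℓ/2))*(Γ-1/100) := by
        have h1 : (x.2-p.2)*(Γ+g.2) ≤ (-(3*ℓ/2))*(Γ+g.2) :=
          mul_le_mul_of_nonneg_right (by linarith) (by linarith [hg2'.1])
        nlinarith [hg2'.1]
      linarith [mul_le_of_abs hb1 hg1'']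

lemma pt_coord_mem {N : ℕ} {ℓ : ℝ} (hl : 0 < ℓ) (hNl : (N:ℝ)*ℓ = 1) {n : ℕ} (hn : n ≤ N) :
    0 ≤ (n:ℝ)*ℓ ∧ (n:ℝ)*ℓ ≤ 1 := by
  constructor
  · positivity
  · rw [← hNl]
    have : (n:ℝ) ≤ N := by exact_mod_cast hn
    nlinarith

lemma two_le_far {a b : ℕ} {ℓ : ℝ} (hl : 0 < ℓ) (h : ℓ < |(a:ℝ)*ℓ - (b:ℝ)*ℓ|) :
    2*ℓ ≤ |(a:ℝ)*ℓ - (b:ℝ)*ℓ| := by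
  have h1 : |(a:ℝ)*ℓ - (b:ℝ)*ℓ| = |(a:ℝ) - b| * ℓ := by
    rw [← sub_mul, abs_mul, abs_of_pos hl]
  rw [h1] at h ⊢
  have h2 : 1 < |(a:ℝ) - b| := by
    by_contra hc
    push_neg at hc
    nlinarith
  have h3 : (2:ℝ) ≤ |(a:ℝ) - b| := by
    have : ((a:ℝ) - b) = ((a - b : ℤ) : ℝ) := by push_cast; ring
    rw [this, ← Int.cast_abs] at h2 ⊢
    have : (1:ℤ) < |(a:ℤ) - b| := by exact_mod_cast h2
    exact_mod_cast this
  nlinarith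

lemma maximizer_neighbor {N : ℕ} {ℓ Γ : ℝ} (hl : 0 < ℓ) (hl1 : ℓ ≤ 1)
    (hNl : (N:ℝ)*ℓ = 1) (hΓ : 6 ≤ Γ*ℓ)
    {A : ℕ×ℕ → Fin 5 → ℝ} {g : ℕ×ℕ → ℝ×ℝ}
    (hA : ∀ k ∈ grid N, ∀ i, A k i ∈ Set.Icc (0.4:ℝ) 0.6)
    (hg : ∀ k ∈ grid N, |(g k).1| ≤ 0.01 ∧ |(g k).2| ≤ 0.01)
    {k m : ℕ×ℕ} (hk : k ∈ grid N) (hm : m ∈ grid N)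
    {x : ℝ×ℝ} (hx1 : x.1 ∈ Set.Icc (0:ℝ) 1) (hx2 : x.2 ∈ Set.Icc (0:ℝ) 1)
    (hxp : ‖x - pt ℓ k‖ ≤ ℓ/2)
    (hge : mesa ℓ Γ (pt ℓ k) (A k) (g k) x ≤ mesa ℓ Γ (pt ℓ m) (A m) (g m) x) :
    ‖pt ℓ m - pt ℓ k‖ ≤ ℓ := by
  have hΓ0 : (0:ℝ) ≤ Γ := by nlinarith
  have hc := norm_coords hxp
  have hc1 : |x.1 - (pt ℓ k).1| ≤ ℓ/2 := by simpa using hc.1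
  have hc2 : |x.2 - (pt ℓ k).2| ≤ ℓ/2 := by simpa using hc.2
  by_contra h
  push_neg at h
  rw [Prod.norm_def] at h
  simp only [Real.norm_eq_abs, Prod.fst_sub, Prod.snd_sub] at h
  -- bounds |x.i - (pt m).i| ≤ 1
  have hm1 := pt_coord_mem hl hNl (mem_grid hm).1
  have hm2 := pt_coord_mem hl hNl (mem_grid hm).2
  have hb1 : |x.1 - (pt ℓ m).1| ≤ 1 := by
    have e : (pt ℓ m).1 = (m.1:ℝ)*ℓ := rfl
    rw [e, abs_le]
    constructor <;> linarith [hx1.1, hx1.2, hm1.1, hm1.2]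
  have hb2 : |x.2 - (pt ℓ m).2| ≤ 1 := by
    have e : (pt ℓ m).2 = (m.2:ℝ)*ℓ := rfl
    rw [e, abs_le]
    constructor <;> linarith [hx2.1, hx2.2, hm2.1, hm2.2]
  have hfar : 3*ℓ/2 ≤ |x.1 - (pt ℓ m).1| ∨ 3*ℓ/2 ≤ |x.2 - (pt ℓ m).2| := by
    rcases lt_max_iff.1 h with h' | h'
    · left
      have h2 := two_le_far hl (by simpa [pt] using h')
      have := abs_sub_le (pt ℓ m).1 x.1 (pt ℓ k).1
      rw [abs_sub_comm (pt ℓ m).1 x.1] at this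
      have h2' : 2*ℓ ≤ |(pt ℓ m).1 - (pt ℓ k).1| := by simpa [pt] using h2
      linarith
    · right
      have h2 := two_le_far hl (by simpa [pt] using h')
      have := abs_sub_le (pt ℓ m).2 x.2 (pt ℓ k).2
      rw [abs_sub_comm (pt ℓ m).2 x.2] at this
      have h2' : 2*ℓ ≤ |(pt ℓ m).2 - (pt ℓ k).2| := by simpa [pt] using h2
      linarith
  have hlow := mesa_lb hl hl1 hΓ0 (hA k hk) (hg k hk).1 (hg k hk).2 hc1 hc2
  have hhigh := mesa_far hl hl1 hΓ (hA m hm) (hg m hm).1 (hg m hm).2 hb1 hb2 hfar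
  linarith

lemma mesa_le_Pc {ℓ Γ p a g x} : mesa ℓ Γ p a g x ≤ Pc p (a 0) g x := min_le_left _ _
lemma mesa_le_Pr {ℓ Γ p a g x} : mesa ℓ Γ p a g x ≤ Pr ℓ Γ p (a 1) g x :=
  (min_le_right _ _).trans (min_le_left _ _)
lemma mesa_le_Pt {ℓ Γ p a g x} : mesa ℓ Γ p a g x ≤ Pt ℓ Γ p (a 2) g x :=
  (min_le_right _ _).trans ((min_le_right _ _).trans (min_le_left _ _))
lemma mesa_le_Pl {ℓ Γ p a g x} : mesa ℓ Γ p a g x ≤ Pl ℓ Γ p (a 3) g x :=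
  (min_le_right _ _).trans ((min_le_right _ _).trans ((min_le_right _ _).trans (min_le_left _ _)))
lemma mesa_le_Pb {ℓ Γ p a g x} : mesa ℓ Γ p a g x ≤ Pb ℓ Γ p (a 4) g x :=
  (min_le_right _ _).trans ((min_le_right _ _).trans ((min_le_right _ _).trans (min_le_right _ _)))

lemma self_dist {N : ℕ} {ℓ : ℝ} (hl : 0 < ℓ) {m : ℕ×ℕ}
    {A : ℕ×ℕ → Fin 5 → ℝ} {g : ℕ×ℕ → ℝ×ℝ}
    (hm : m ∈ grid N)
    (hadj2 : ∀ k ∈ grid N, ∀ k' ∈ grid N, ‖pt ℓ k - pt ℓ k'‖ ≤ ℓ → ∀ i j : Fin 5,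
      |A k' i - A k j
        - (2 * (g k).1 * ((pt ℓ k').1 - (pt ℓ k).1) + 2 * (g k).2 * ((pt ℓ k').2 - (pt ℓ k).2))|
        ≤ ℓ ^ 2) (i j : Fin 5) :
    |A m i - A m j| ≤ ℓ^2 := by
  have h := hadj2 m hm m hm (by simp [hl.le]) i j
  simpa using h

set_option maxHeartbeats 1600000 in
lemma dir1 {N : ℕ} {ℓ Γ : ℝ} (hl : 0 < ℓ) (hl1 : ℓ ≤ 1) (hNl : (N:ℝ)*ℓ = 1) (hΓl : 6 ≤ Γ*ℓ)
    {A : ℕ×ℕ → Fin 5 → ℝ} {g : ℕ×ℕ → ℝ×ℝ}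
    (hA : ∀ j ∈ grid N, ∀ i, A j i ∈ Set.Icc (0.4:ℝ) 0.6)
    (hgab : ∀ j ∈ grid N, |(g j).1| ≤ 0.01 ∧ |(g j).2| ≤ 0.01)
    (hadj1 : ∀ k ∈ grid N, ∀ k' ∈ grid N, ‖pt ℓ k - pt ℓ k'‖ ≤ ℓ → ‖g k - g k'‖ ≤ ℓ)
    (hadj2 : ∀ k ∈ grid N, ∀ k' ∈ grid N, ‖pt ℓ k - pt ℓ k'‖ ≤ ℓ → ∀ i j : Fin 5,
      |A k' i - A k j
        - (2 * (g k).1 * ((pt ℓ k').1 - (pt ℓ k).1) + 2 * (g k).2 * ((pt ℓ k').2 - (pt ℓ k).2))|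
        ≤ ℓ ^ 2)
    {f : ℝ×ℝ → ℝ}
    (hf : ∀ y, f y = (grid N).sup' (grid_nonempty N) fun j => mesa ℓ Γ (pt ℓ j) (A j) (g j) y)
    {k : ℕ×ℕ} (hk : k ∈ grid N) {x : ℝ×ℝ}
    (hx1 : x.1 ∈ Set.Icc (0:ℝ) 1) (hx2 : x.2 ∈ Set.Icc (0:ℝ) 1)
    (hxp : ‖x - pt ℓ k‖ ≤ ℓ/2)
    (hdiff : DifferentiableAt ℝ f x)
    (hgk : 10*ℓ ≤ (g k).1) :
    (g k).1 - ℓ ≤ fderiv ℝ f x (1, 0) := by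
  have hΓ0 : (0:ℝ) < Γ := by nlinarith
  obtain ⟨m, hm, hfm⟩ := Finset.exists_mem_eq_sup' (grid_nonempty N)
    (fun j => mesa ℓ Γ (pt ℓ j) (A j) (g j) x)
  have hfx : f x = mesa ℓ Γ (pt ℓ m) (A m) (g m) x := by rw [hf x, hfm]
  have hub : ∀ j ∈ grid N, mesa ℓ Γ (pt ℓ j) (A j) (g j) x ≤ mesa ℓ Γ (pt ℓ m) (A m) (g m) x := by
    intro j hj
    have h := Finset.le_sup' (fun j => mesa ℓ Γ (pt ℓ j) (A j) (g j) x) hj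
    rw [hfm] at h
    exact h
  have hnb : ‖pt ℓ m - pt ℓ k‖ ≤ ℓ :=
    maximizer_neighbor hl hl1 hNl hΓl hA hgab hk hm hx1 hx2 hxp (hub k hk)
  have hnbc := norm_coords hnb
  have hnb1 : |(m.1:ℝ)*ℓ - (k.1:ℝ)*ℓ| ≤ ℓ := by simpa [pt] using hnbc.1
  have hnb2 : |(m.2:ℝ)*ℓ - (k.2:ℝ)*ℓ| ≤ ℓ := by simpa [pt] using hnbc.2
  have hxc := norm_coords hxp
  have hxc1 : |x.1 - (k.1:ℝ)*ℓ| ≤ ℓ/2 := by simpa [pt] using hxc.1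
  have hxc2 : |x.2 - (k.2:ℝ)*ℓ| ≤ ℓ/2 := by simpa [pt] using hxc.2
  have hu1 : |x.1 - (m.1:ℝ)*ℓ| ≤ 3*ℓ/2 := by
    have h1 := abs_le.1 hnb1; have h2 := abs_le.1 hxc1
    rw [abs_le]; constructor <;> linarith [h1.1, h1.2, h2.1, h2.2]
  have hu2 : |x.2 - (m.2:ℝ)*ℓ| ≤ 3*ℓ/2 := by
    have h1 := abs_le.1 hnb2; have h2 := abs_le.1 hxc2
    rw [abs_le]; constructor <;> linarith [h1.1, h1.2, h2.1, h2.2]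
  have hgkm : ‖g k - g m‖ ≤ ℓ := hadj1 k hk m hm (by rwa [norm_sub_rev])
  have hgkmc := norm_coords hgkm
  have hgkm1 : |(g m).1 - (g k).1| ≤ ℓ := by
    rw [abs_sub_comm]; simpa using hgkmc.1
  have hgkb := hgab k hk
  have hl9 : ℓ ≤ 1/900 := by
    have h1 := (abs_le.1 hgkb.1).2
    norm_num at h1; linarith
  have hγ1 : (g k).1 - ℓ ≤ (g m).1 := by have := abs_le.1 hgkm1; linarith [this.1]
  -- the inactivity of the right piece
  have hinact : mesa ℓ Γ (pt ℓ m) (A m) (g m) x < Pr ℓ Γ (pt ℓ m) (A m 1) (g m) x := by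
    by_contra hcon
    push_neg at hcon
    have hPc := hcon.trans (mesa_le_Pc (ℓ := ℓ) (Γ := Γ))
    have hPt := hcon.trans (mesa_le_Pt (ℓ := ℓ) (Γ := Γ))
    have hPb := hcon.trans (mesa_le_Pb (ℓ := ℓ) (Γ := Γ))
    simp only [Pr, Pc, Pt, Pb, pt] at hPc hPt hPb
    have hb10 := self_dist hl hm hadj2 1 0
    have hpos : ℓ/3 ≤ x.1 - (m.1:ℝ)*ℓ :=
      core_pos (γ₁ := (g m).1) hl hl9 hΓl hb10 (by linarith)
    have hm1N : m.1 < N := by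
      have hx1' := hx1.2
      have h1 : (m.1:ℝ)*ℓ < (N:ℝ)*ℓ := by linarith
      have h2 : (m.1:ℝ) < (N:ℝ) := lt_of_mul_lt_mul_right h1 hl.le
      exact_mod_cast h2
    set m'' : ℕ×ℕ := (m.1+1, m.2) with hm''def
    have hm'' : m'' ∈ grid N := by
      simp only [grid, Finset.mem_product, Finset.mem_range, hm''def]
      exact ⟨by omega, by
        have := (mem_grid hm).2; omega⟩
    have hptd : pt ℓ m'' - pt ℓ m = (ℓ, 0) := by
      simp only [pt, hm''def, Prod.mk_sub_mk, Prod.mk.injEq]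
      constructor
      · push_cast; ring
      · ring
    have hdist : ‖pt ℓ m - pt ℓ m''‖ ≤ ℓ := by
      rw [norm_sub_rev, hptd, Prod.norm_def]
      simp [abs_of_pos hl, hl.le]
    have hcij : ∀ i j : Fin 5, |A m'' i - A m j - 2*(g m).1*ℓ| ≤ ℓ^2 := by
      intro i j
      have h := hadj2 m hm m'' hm'' hdist i j
      have e1 : (pt ℓ m'').1 - (pt ℓ m).1 = ℓ := by
        have := congrArg Prod.fst hptd; simpa using this
      have e2 : (pt ℓ m'').2 - (pt ℓ m).2 = 0 := by
        have := congrArg Prod.snd hptd; simpa using this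
      rw [e1, e2] at h
      simpa using h
    have hd := norm_coords (hadj1 m hm m'' hm'' hdist)
    have hd1 : |(g m'').1 - (g m).1| ≤ ℓ := by rw [abs_sub_comm]; simpa using hd.1
    have hd2 : |(g m'').2 - (g m).2| ≤ ℓ := by rw [abs_sub_comm]; simpa using hd.2
    have core := core_main (u₁ := x.1 - (m.1:ℝ)*ℓ) (u₂ := x.2 - (m.2:ℝ)*ℓ)
      (γ₁ := (g m).1) (γ₂ := (g m).2) (δ₁ := (g m'').1) (δ₂ := (g m'').2)
      (gk := (g k).1)
      (b0 := A m 0) (b1 := A m 1) (b2 := A m 2) (b3 := A m 3) (b4 := A m 4)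
      (c0 := A m'' 0) (c1 := A m'' 1) (c2 := A m'' 2) (c3 := A m'' 3) (c4 := A m'' 4)
      hl hl9 hΓl hu1 hu2 hgk hgkm1 hd1 hd2 (self_dist hl hm hadj2 1 0)
      (hcij 0 0) (hcij 1 1) (hcij 2 2) (hcij 3 1) (hcij 4 4)
      (by linarith) (by linarith) (by linarith)
    have heq : mesa ℓ Γ (pt ℓ m) (A m) (g m) x = Pr ℓ Γ (pt ℓ m) (A m 1) (g m) x :=
      le_antisymm mesa_le_Pr hcon
    obtain ⟨C0, C1, C2, C3, C4⟩ := core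
    have e1 : ((m''.1 : ℕ):ℝ)*ℓ = (m.1:ℝ)*ℓ + ℓ := by
      rw [hm''def]; push_cast; ring
    have e2 : ((m''.2 : ℕ):ℝ)*ℓ = (m.2:ℝ)*ℓ := by rw [hm''def]
    have hgt : mesa ℓ Γ (pt ℓ m) (A m) (g m) x < mesa ℓ Γ (pt ℓ m'') (A m'') (g m'') x := by
      rw [heq]
      unfold mesa
      simp only [lt_min_iff]
      refine ⟨?_, ?_, ?_, ?_, ?_⟩
      · simp only [Pc, Pr, pt]; rw [e1, e2]; linarith [C0]
      · simp only [Pr, pt]; rw [e1, e2]; linarith [C1]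
      · simp only [Pt, Pr, pt]; rw [e1, e2]; linarith [C2]
      · simp only [Pl, Pr, pt]; rw [e1, e2]; linarith [C3]
      · simp only [Pb, Pr, pt]; rw [e1, e2]; linarith [C4]
    linarith [hub m'' hm'']
  -- growth and derivative
  have hD := hdiff.hasFDerivAt
  set ε := Pr ℓ Γ (pt ℓ m) (A m 1) (g m) x - mesa ℓ Γ (pt ℓ m) (A m) (g m) x with hεdef
  have hε : 0 < ε := by simp only [hεdef]; linarith
  have hΓ1 : (0:ℝ) < Γ + 1 := by linarith
  refine deriv_ge hD (div_pos hε hΓ1) ?_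
  intro t ht0 htδ
  have hy1 : (x + t • ((1:ℝ),(0:ℝ))).1 = x.1 + t := by simp
  have hy2 : (x + t • ((1:ℝ),(0:ℝ))).2 = x.2 := by simp
  have hfy : mesa ℓ Γ (pt ℓ m) (A m) (g m) (x + t • ((1:ℝ),(0:ℝ))) ≤ f (x + t • ((1:ℝ),(0:ℝ))) := by
    rw [hf]
    exact Finset.le_sup' (fun j => mesa ℓ Γ (pt ℓ j) (A j) (g j) (x + t • ((1:ℝ),(0:ℝ)))) hm
  have s1 : t*((g k).1 - ℓ) ≤ t*(g m).1 := mul_le_mul_of_nonneg_left hγ1 ht0.le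
  have s3 : t*(Γ+1) ≤ ε := by
    have h1 : t*(Γ+1) < (ε/(Γ+1))*(Γ+1) := mul_lt_mul_of_pos_right htδ hΓ1
    rw [div_mul_cancel₀ _ (ne_of_gt hΓ1)] at h1
    exact h1.le
  have hmesay : mesa ℓ Γ (pt ℓ m) (A m) (g m) x + ((g k).1 - ℓ)*t ≤
      mesa ℓ Γ (pt ℓ m) (A m) (g m) (x + t • ((1:ℝ),(0:ℝ))) := by
    have c1 := mesa_le_Pc (ℓ := ℓ) (Γ := Γ) (p := pt ℓ m) (a := A m) (g := g m) (x := x)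
    have c2 := hinact
    have c3 := mesa_le_Pt (ℓ := ℓ) (Γ := Γ) (p := pt ℓ m) (a := A m) (g := g m) (x := x)
    have c4 := mesa_le_Pl (ℓ := ℓ) (Γ := Γ) (p := pt ℓ m) (a := A m) (g := g m) (x := x)
    have c5 := mesa_le_Pb (ℓ := ℓ) (Γ := Γ) (p := pt ℓ m) (a := A m) (g := g m) (x := x)
    simp only [Pc, Pr, Pt, Pl, Pb, pt] at c1 c2 c3 c4 c5
    have hγ1m := abs_le.1 hgkm1
    have hs2 : t*((g k).1 - ℓ) ≤ t*(Γ + (g m).1) :=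
      mul_le_mul_of_nonneg_left (by linarith [hγ1m.1]) ht0.le
    have hs4 : t*(((g k).1 - ℓ) + Γ - (g m).1) ≤ t*(Γ+1) :=
      mul_le_mul_of_nonneg_left (by linarith [hγ1m.1]) ht0.le
    refine le_min ?_ (le_min ?_ (le_min ?_ (le_min ?_ ?_)))
    · simp only [Pc, pt]
      rw [hy1, hy2]
      linarith [c1, s1]
    · have hPreq : Pr ℓ Γ (pt ℓ m) (A m 1) (g m) x
          = (x.1 - (m.1:ℝ)*ℓ)*(-Γ+(g m).1) + (x.2 - (m.2:ℝ)*ℓ)*(g m).2 + A m 1 + Γ*ℓ/2 := by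
        simp only [Pr, pt]
      have hbr : mesa ℓ Γ (pt ℓ m) (A m) (g m) x
          = mesa ℓ Γ ((m.1:ℝ)*ℓ, (m.2:ℝ)*ℓ) (A m) (g m) x := rfl
      simp only [Pr, pt]
      rw [hy1, hy2]
      linarith [hs4, s3, hεdef, hPreq, hbr]
    · simp only [Pt, pt]
      rw [hy1, hy2]
      linarith [c3, s1]
    · simp only [Pl, pt]
      rw [hy1, hy2]
      linarith [c4, hs2]
    · simp only [Pb, pt]
      rw [hy1, hy2]
      linarith [c5, s1]
  rw [hfx]
  linarith [hmesay, hfy]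

set_option maxHeartbeats 1600000 in
lemma dir2 {N : ℕ} {ℓ Γ : ℝ} (hl : 0 < ℓ) (hl1 : ℓ ≤ 1) (hNl : (N:ℝ)*ℓ = 1) (hΓl : 6 ≤ Γ*ℓ)
    {A : ℕ×ℕ → Fin 5 → ℝ} {g : ℕ×ℕ → ℝ×ℝ}
    (hA : ∀ j ∈ grid N, ∀ i, A j i ∈ Set.Icc (0.4:ℝ) 0.6)
    (hgab : ∀ j ∈ grid N, |(g j).1| ≤ 0.01 ∧ |(g j).2| ≤ 0.01)
    (hadj1 : ∀ k ∈ grid N, ∀ k' ∈ grid N, ‖pt ℓ k - pt ℓ k'‖ ≤ ℓ → ‖g k - g k'‖ ≤ ℓ)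
    (hadj2 : ∀ k ∈ grid N, ∀ k' ∈ grid N, ‖pt ℓ k - pt ℓ k'‖ ≤ ℓ → ∀ i j : Fin 5,
      |A k' i - A k j
        - (2 * (g k).1 * ((pt ℓ k').1 - (pt ℓ k).1) + 2 * (g k).2 * ((pt ℓ k').2 - (pt ℓ k).2))|
        ≤ ℓ ^ 2)
    {f : ℝ×ℝ → ℝ}
    (hf : ∀ y, f y = (grid N).sup' (grid_nonempty N) fun j => mesa ℓ Γ (pt ℓ j) (A j) (g j) y)
    {k : ℕ×ℕ} (hk : k ∈ grid N) {x : ℝ×ℝ}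
    (hx1 : x.1 ∈ Set.Icc (0:ℝ) 1) (hx2 : x.2 ∈ Set.Icc (0:ℝ) 1)
    (hxp : ‖x - pt ℓ k‖ ≤ ℓ/2)
    (hdiff : DifferentiableAt ℝ f x)
    (hgk : 10*ℓ ≤ -(g k).1) :
    -(g k).1 - ℓ ≤ fderiv ℝ f x (-1, 0) := by
  have hΓ0 : (0:ℝ) < Γ := by nlinarith
  obtain ⟨m, hm, hfm⟩ := Finset.exists_mem_eq_sup' (grid_nonempty N)
    (fun j => mesa ℓ Γ (pt ℓ j) (A j) (g j) x)
  have hfx : f x = mesa ℓ Γ (pt ℓ m) (A m) (g m) x := by rw [hf x, hfm]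
  have hub : ∀ j ∈ grid N, mesa ℓ Γ (pt ℓ j) (A j) (g j) x ≤ mesa ℓ Γ (pt ℓ m) (A m) (g m) x := by
    intro j hj
    have h := Finset.le_sup' (fun j => mesa ℓ Γ (pt ℓ j) (A j) (g j) x) hj
    rw [hfm] at h
    exact h
  have hnb : ‖pt ℓ m - pt ℓ k‖ ≤ ℓ :=
    maximizer_neighbor hl hl1 hNl hΓl hA hgab hk hm hx1 hx2 hxp (hub k hk)
  have hnbc := norm_coords hnb
  have hnb1 : |(m.1:ℝ)*ℓ - (k.1:ℝ)*ℓ| ≤ ℓ := by simpa [pt] using hnbc.1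
  have hnb2 : |(m.2:ℝ)*ℓ - (k.2:ℝ)*ℓ| ≤ ℓ := by simpa [pt] using hnbc.2
  have hxc := norm_coords hxp
  have hxc1 : |x.1 - (k.1:ℝ)*ℓ| ≤ ℓ/2 := by simpa [pt] using hxc.1
  have hxc2 : |x.2 - (k.2:ℝ)*ℓ| ≤ ℓ/2 := by simpa [pt] using hxc.2
  have hu1 : |x.1 - (m.1:ℝ)*ℓ| ≤ 3*ℓ/2 := by
    have h1 := abs_le.1 hnb1; have h2 := abs_le.1 hxc1
    rw [abs_le]; constructor <;> linarith [h1.1, h1.2, h2.1, h2.2]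
  have hu2 : |x.2 - (m.2:ℝ)*ℓ| ≤ 3*ℓ/2 := by
    have h1 := abs_le.1 hnb2; have h2 := abs_le.1 hxc2
    rw [abs_le]; constructor <;> linarith [h1.1, h1.2, h2.1, h2.2]
  have hu1' : |(m.1:ℝ)*ℓ - x.1| ≤ 3*ℓ/2 := by rw [abs_sub_comm]; exact hu1
  have hgkm : ‖g k - g m‖ ≤ ℓ := hadj1 k hk m hm (by rwa [norm_sub_rev])
  have hgkmc := norm_coords hgkm
  have hgkm1 : |(g m).1 - (g k).1| ≤ ℓ := by
    rw [abs_sub_comm]; simpa using hgkmc.1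
  have hgkm1n : |(-(g m).1) - (-(g k).1)| ≤ ℓ := by
    rw [show -(g m).1 - -(g k).1 = -((g m).1 - (g k).1) by ring, abs_neg]; exact hgkm1
  have hgkb := hgab k hk
  have hl9 : ℓ ≤ 1/900 := by
    have h1 := (abs_le.1 hgkb.1).1
    norm_num at h1; linarith
  have hγ1m := abs_le.1 hgkm1
  have hγ1 : -(g k).1 - ℓ ≤ -(g m).1 := by linarith [hγ1m.2]
  -- the inactivity of the left piece
  have hinact : mesa ℓ Γ (pt ℓ m) (A m) (g m) x < Pl ℓ Γ (pt ℓ m) (A m 3) (g m) x := by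
    by_contra hcon
    push_neg at hcon
    have hPc := hcon.trans (mesa_le_Pc (ℓ := ℓ) (Γ := Γ))
    have hPt := hcon.trans (mesa_le_Pt (ℓ := ℓ) (Γ := Γ))
    have hPb := hcon.trans (mesa_le_Pb (ℓ := ℓ) (Γ := Γ))
    simp only [Pl, Pc, Pt, Pb, pt] at hPc hPt hPb
    have hb10 := self_dist hl hm hadj2 3 0
    have hpos : ℓ/3 ≤ (m.1:ℝ)*ℓ - x.1 :=
      core_pos (γ₁ := -(g m).1) hl hl9 hΓl hb10 (by linarith)
    have hm11 : 1 ≤ m.1 := by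
      rcases Nat.eq_zero_or_pos m.1 with h0 | h0
      · exfalso
        have hz : ((m.1:ℕ):ℝ) = 0 := by rw [h0]; norm_num
        rw [hz] at hpos
        have := hx1.1
        linarith
      · exact h0
    have hcast : ((m.1 - 1 : ℕ):ℝ) = (m.1:ℝ) - 1 := by
      rw [Nat.cast_sub hm11]; norm_num
    set m'' : ℕ×ℕ := (m.1 - 1, m.2) with hm''def
    have hm'' : m'' ∈ grid N := by
      have h1 := (mem_grid hm).1
      have h2 := (mem_grid hm).2
      simp only [grid, Finset.mem_product, Finset.mem_range, hm''def]
      exact ⟨by omega, by omega⟩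
    have hptd : pt ℓ m'' - pt ℓ m = (-ℓ, 0) := by
      simp only [pt, hm''def, Prod.mk_sub_mk, Prod.mk.injEq]
      constructor
      · rw [hcast]; ring
      · ring
    have hdist : ‖pt ℓ m - pt ℓ m''‖ ≤ ℓ := by
      rw [norm_sub_rev, hptd, Prod.norm_def]
      simp [abs_of_pos hl, hl.le]
    have hcij : ∀ i j : Fin 5, |A m'' i - A m j - 2*(-(g m).1)*ℓ| ≤ ℓ^2 := by
      intro i j
      have h := hadj2 m hm m'' hm'' hdist i j
      have e1 : (pt ℓ m'').1 - (pt ℓ m).1 = -ℓ := by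
        have := congrArg Prod.fst hptd; simpa using this
      have e2 : (pt ℓ m'').2 - (pt ℓ m).2 = 0 := by
        have := congrArg Prod.snd hptd; simpa using this
      rw [e1, e2] at h
      have he : A m'' i - A m j - (2 * (g m).1 * (-ℓ) + 2 * (g m).2 * 0)
          = A m'' i - A m j - 2*(-(g m).1)*ℓ := by ring
      rwa [he] at h
    have hd := norm_coords (hadj1 m hm m'' hm'' hdist)
    have hd1 : |(g m'').1 - (g m).1| ≤ ℓ := by rw [abs_sub_comm]; simpa using hd.1
    have hd2 : |(g m'').2 - (g m).2| ≤ ℓ := by rw [abs_sub_comm]; simpa using hd.2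
    have hd1n : |(-(g m'').1) - (-(g m).1)| ≤ ℓ := by
      rw [show -(g m'').1 - -(g m).1 = -((g m'').1 - (g m).1) by ring, abs_neg]; exact hd1
    have core := core_main (u₁ := (m.1:ℝ)*ℓ - x.1) (u₂ := x.2 - (m.2:ℝ)*ℓ)
      (γ₁ := -(g m).1) (γ₂ := (g m).2) (δ₁ := -(g m'').1) (δ₂ := (g m'').2)
      (gk := -(g k).1)
      (b0 := A m 0) (b1 := A m 3) (b2 := A m 2) (b3 := A m 1) (b4 := A m 4)
      (c0 := A m'' 0) (c1 := A m'' 3) (c2 := A m'' 2) (c3 := A m'' 1) (c4 := A m'' 4)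
      hl hl9 hΓl hu1' hu2 hgk hgkm1n hd1n hd2 (self_dist hl hm hadj2 3 0)
      (hcij 0 0) (hcij 3 3) (hcij 2 2) (hcij 1 3) (hcij 4 4)
      (by linarith) (by linarith) (by linarith)
    have heq : mesa ℓ Γ (pt ℓ m) (A m) (g m) x = Pl ℓ Γ (pt ℓ m) (A m 3) (g m) x :=
      le_antisymm mesa_le_Pl hcon
    obtain ⟨C0, C1, C2, C3, C4⟩ := core
    have e1 : ((m''.1 : ℕ):ℝ)*ℓ = (m.1:ℝ)*ℓ - ℓ := by
      rw [hm''def]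
      show ((m.1 - 1 : ℕ):ℝ)*ℓ = (m.1:ℝ)*ℓ - ℓ
      rw [hcast]; ring
    have e2 : ((m''.2 : ℕ):ℝ)*ℓ = (m.2:ℝ)*ℓ := by rw [hm''def]
    have hgt : mesa ℓ Γ (pt ℓ m) (A m) (g m) x < mesa ℓ Γ (pt ℓ m'') (A m'') (g m'') x := by
      rw [heq]
      unfold mesa
      simp only [lt_min_iff]
      refine ⟨?_, ?_, ?_, ?_, ?_⟩
      · simp only [Pc, Pl, pt]; rw [e1, e2]; linarith [C0]
      · simp only [Pr, Pl, pt]; rw [e1, e2]; linarith [C3]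
      · simp only [Pt, Pl, pt]; rw [e1, e2]; linarith [C2]
      · simp only [Pl, pt]; rw [e1, e2]; linarith [C1]
      · simp only [Pb, Pl, pt]; rw [e1, e2]; linarith [C4]
    linarith [hub m'' hm'']
  -- growth and derivative
  have hD := hdiff.hasFDerivAt
  set ε := Pl ℓ Γ (pt ℓ m) (A m 3) (g m) x - mesa ℓ Γ (pt ℓ m) (A m) (g m) x with hεdef
  have hε : 0 < ε := by simp only [hεdef]; linarith
  have hΓ1 : (0:ℝ) < Γ + 1 := by linarith
  refine deriv_ge hD (div_pos hε hΓ1) ?_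
  intro t ht0 htδ
  have hy1 : (x + t • ((-1:ℝ),(0:ℝ))).1 = x.1 - t := by
    simp only [Prod.fst_add, Prod.smul_fst, smul_eq_mul]; ring
  have hy2 : (x + t • ((-1:ℝ),(0:ℝ))).2 = x.2 := by simp
  have hfy : mesa ℓ Γ (pt ℓ m) (A m) (g m) (x + t • ((-1:ℝ),(0:ℝ))) ≤ f (x + t • ((-1:ℝ),(0:ℝ))) := by
    rw [hf]
    exact Finset.le_sup' (fun j => mesa ℓ Γ (pt ℓ j) (A j) (g j) (x + t • ((-1:ℝ),(0:ℝ)))) hm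
  have s1 : t*(-(g k).1 - ℓ) ≤ t*(-(g m).1) := mul_le_mul_of_nonneg_left hγ1 ht0.le
  have s3 : t*(Γ+1) ≤ ε := by
    have h1 : t*(Γ+1) < (ε/(Γ+1))*(Γ+1) := mul_lt_mul_of_pos_right htδ hΓ1
    rw [div_mul_cancel₀ _ (ne_of_gt hΓ1)] at h1
    exact h1.le
  have hmesay : mesa ℓ Γ (pt ℓ m) (A m) (g m) x + (-(g k).1 - ℓ)*t ≤
      mesa ℓ Γ (pt ℓ m) (A m) (g m) (x + t • ((-1:ℝ),(0:ℝ))) := by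
    have c1 := mesa_le_Pc (ℓ := ℓ) (Γ := Γ) (p := pt ℓ m) (a := A m) (g := g m) (x := x)
    have c2 := mesa_le_Pr (ℓ := ℓ) (Γ := Γ) (p := pt ℓ m) (a := A m) (g := g m) (x := x)
    have c3 := mesa_le_Pt (ℓ := ℓ) (Γ := Γ) (p := pt ℓ m) (a := A m) (g := g m) (x := x)
    have c4 := hinact
    have c5 := mesa_le_Pb (ℓ := ℓ) (Γ := Γ) (p := pt ℓ m) (a := A m) (g := g m) (x := x)
    simp only [Pc, Pr, Pt, Pl, Pb, pt] at c1 c2 c3 c4 c5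
    have hs2 : t*(-(g k).1 - ℓ) ≤ t*(Γ - (g m).1) :=
      mul_le_mul_of_nonneg_left (by linarith [hγ1m.2]) ht0.le
    have hs4 : t*((-(g k).1 - ℓ) + Γ + (g m).1) ≤ t*(Γ+1) :=
      mul_le_mul_of_nonneg_left (by linarith [hγ1m.2]) ht0.le
    refine le_min ?_ (le_min ?_ (le_min ?_ (le_min ?_ ?_)))
    · simp only [Pc, pt]
      rw [hy1, hy2]
      linarith [c1, s1]
    · simp only [Pr, pt]
      rw [hy1, hy2]
      linarith [c2, hs2]
    · simp only [Pt, pt]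
      rw [hy1, hy2]
      linarith [c3, s1]
    · have hPleq : Pl ℓ Γ (pt ℓ m) (A m 3) (g m) x
          = (x.1 - (m.1:ℝ)*ℓ)*(Γ+(g m).1) + (x.2 - (m.2:ℝ)*ℓ)*(g m).2 + A m 3 + Γ*ℓ/2 := by
        simp only [Pl, pt]
      have hbr : mesa ℓ Γ (pt ℓ m) (A m) (g m) x
          = mesa ℓ Γ ((m.1:ℝ)*ℓ, (m.2:ℝ)*ℓ) (A m) (g m) x := rfl
      simp only [Pl, pt]
      rw [hy1, hy2]
      linarith [hs4, s3, hεdef, hPleq, hbr]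
    · simp only [Pb, pt]
      rw [hy1, hy2]
      linarith [c5, s1]
  rw [hfx]
  linarith [hmesay, hfy]

set_option maxHeartbeats 1600000 in
lemma dir3 {N : ℕ} {ℓ Γ : ℝ} (hl : 0 < ℓ) (hl1 : ℓ ≤ 1) (hNl : (N:ℝ)*ℓ = 1) (hΓl : 6 ≤ Γ*ℓ)
    {A : ℕ×ℕ → Fin 5 → ℝ} {g : ℕ×ℕ → ℝ×ℝ}
    (hA : ∀ j ∈ grid N, ∀ i, A j i ∈ Set.Icc (0.4:ℝ) 0.6)
    (hgab : ∀ j ∈ grid N, |(g j).1| ≤ 0.01 ∧ |(g j).2| ≤ 0.01)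
    (hadj1 : ∀ k ∈ grid N, ∀ k' ∈ grid N, ‖pt ℓ k - pt ℓ k'‖ ≤ ℓ → ‖g k - g k'‖ ≤ ℓ)
    (hadj2 : ∀ k ∈ grid N, ∀ k' ∈ grid N, ‖pt ℓ k - pt ℓ k'‖ ≤ ℓ → ∀ i j : Fin 5,
      |A k' i - A k j
        - (2 * (g k).1 * ((pt ℓ k').1 - (pt ℓ k).1) + 2 * (g k).2 * ((pt ℓ k').2 - (pt ℓ k).2))|
        ≤ ℓ ^ 2)
    {f : ℝ×ℝ → ℝ}
    (hf : ∀ y, f y = (grid N).sup' (grid_nonempty N) fun j => mesa ℓ Γ (pt ℓ j) (A j) (g j) y)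
    {k : ℕ×ℕ} (hk : k ∈ grid N) {x : ℝ×ℝ}
    (hx1 : x.1 ∈ Set.Icc (0:ℝ) 1) (hx2 : x.2 ∈ Set.Icc (0:ℝ) 1)
    (hxp : ‖x - pt ℓ k‖ ≤ ℓ/2)
    (hdiff : DifferentiableAt ℝ f x)
    (hgk : 10*ℓ ≤ (g k).2) :
    (g k).2 - ℓ ≤ fderiv ℝ f x (0, 1) := by
  have hΓ0 : (0:ℝ) < Γ := by nlinarith
  obtain ⟨m, hm, hfm⟩ := Finset.exists_mem_eq_sup' (grid_nonempty N)
    (fun j => mesa ℓ Γ (pt ℓ j) (A j) (g j) x)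
  have hfx : f x = mesa ℓ Γ (pt ℓ m) (A m) (g m) x := by rw [hf x, hfm]
  have hub : ∀ j ∈ grid N, mesa ℓ Γ (pt ℓ j) (A j) (g j) x ≤ mesa ℓ Γ (pt ℓ m) (A m) (g m) x := by
    intro j hj
    have h := Finset.le_sup' (fun j => mesa ℓ Γ (pt ℓ j) (A j) (g j) x) hj
    rw [hfm] at h
    exact h
  have hnb : ‖pt ℓ m - pt ℓ k‖ ≤ ℓ :=
    maximizer_neighbor hl hl1 hNl hΓl hA hgab hk hm hx1 hx2 hxp (hub k hk)
  have hnbc := norm_coords hnb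
  have hnb1 : |(m.1:ℝ)*ℓ - (k.1:ℝ)*ℓ| ≤ ℓ := by simpa [pt] using hnbc.1
  have hnb2 : |(m.2:ℝ)*ℓ - (k.2:ℝ)*ℓ| ≤ ℓ := by simpa [pt] using hnbc.2
  have hxc := norm_coords hxp
  have hxc1 : |x.1 - (k.1:ℝ)*ℓ| ≤ ℓ/2 := by simpa [pt] using hxc.1
  have hxc2 : |x.2 - (k.2:ℝ)*ℓ| ≤ ℓ/2 := by simpa [pt] using hxc.2
  have hu1 : |x.1 - (m.1:ℝ)*ℓ| ≤ 3*ℓ/2 := by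
    have h1 := abs_le.1 hnb1; have h2 := abs_le.1 hxc1
    rw [abs_le]; constructor <;> linarith [h1.1, h1.2, h2.1, h2.2]
  have hu2 : |x.2 - (m.2:ℝ)*ℓ| ≤ 3*ℓ/2 := by
    have h1 := abs_le.1 hnb2; have h2 := abs_le.1 hxc2
    rw [abs_le]; constructor <;> linarith [h1.1, h1.2, h2.1, h2.2]
  have hgkm : ‖g k - g m‖ ≤ ℓ := hadj1 k hk m hm (by rwa [norm_sub_rev])
  have hgkmc := norm_coords hgkm
  have hgkm1 : |(g m).1 - (g k).1| ≤ ℓ := by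
    rw [abs_sub_comm]; simpa using hgkmc.1
  have hgkm2 : |(g m).2 - (g k).2| ≤ ℓ := by
    rw [abs_sub_comm]; simpa using hgkmc.2
  have hgkb := hgab k hk
  have hl9 : ℓ ≤ 1/900 := by
    have h1 := (abs_le.1 hgkb.2).2
    norm_num at h1; linarith
  have hγ2m := abs_le.1 hgkm2
  have hγ1 : (g k).2 - ℓ ≤ (g m).2 := by linarith [hγ2m.1]
  -- the inactivity of the top piece
  have hinact : mesa ℓ Γ (pt ℓ m) (A m) (g m) x < Pt ℓ Γ (pt ℓ m) (A m 2) (g m) x := by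
    by_contra hcon
    push_neg at hcon
    have hPc := hcon.trans (mesa_le_Pc (ℓ := ℓ) (Γ := Γ))
    have hPr := hcon.trans (mesa_le_Pr (ℓ := ℓ) (Γ := Γ))
    have hPl := hcon.trans (mesa_le_Pl (ℓ := ℓ) (Γ := Γ))
    simp only [Pt, Pc, Pr, Pl, pt] at hPc hPr hPl
    have hb10 := self_dist hl hm hadj2 2 0
    have hpos : ℓ/3 ≤ x.2 - (m.2:ℝ)*ℓ :=
      core_pos (γ₁ := (g m).2) hl hl9 hΓl hb10 (by linarith)
    have hm2N : m.2 < N := by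
      have hx2' := hx2.2
      have h1 : (m.2:ℝ)*ℓ < (N:ℝ)*ℓ := by linarith
      have h2 : (m.2:ℝ) < (N:ℝ) := lt_of_mul_lt_mul_right h1 hl.le
      exact_mod_cast h2
    set m'' : ℕ×ℕ := (m.1, m.2+1) with hm''def
    have hm'' : m'' ∈ grid N := by
      simp only [grid, Finset.mem_product, Finset.mem_range, hm''def]
      exact ⟨by have := (mem_grid hm).1; omega, by omega⟩
    have hptd : pt ℓ m'' - pt ℓ m = (0, ℓ) := by
      simp only [pt, hm''def, Prod.mk_sub_mk, Prod.mk.injEq]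
      constructor
      · ring
      · push_cast; ring
    have hdist : ‖pt ℓ m - pt ℓ m''‖ ≤ ℓ := by
      rw [norm_sub_rev, hptd, Prod.norm_def]
      simp [abs_of_pos hl, hl.le]
    have hcij : ∀ i j : Fin 5, |A m'' i - A m j - 2*(g m).2*ℓ| ≤ ℓ^2 := by
      intro i j
      have h := hadj2 m hm m'' hm'' hdist i j
      have e1 : (pt ℓ m'').1 - (pt ℓ m).1 = 0 := by
        have := congrArg Prod.fst hptd; simpa using this
      have e2 : (pt ℓ m'').2 - (pt ℓ m).2 = ℓ := by
        have := congrArg Prod.snd hptd; simpa using this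
      rw [e1, e2] at h
      simpa using h
    have hd := norm_coords (hadj1 m hm m'' hm'' hdist)
    have hd1 : |(g m'').1 - (g m).1| ≤ ℓ := by rw [abs_sub_comm]; simpa using hd.1
    have hd2 : |(g m'').2 - (g m).2| ≤ ℓ := by rw [abs_sub_comm]; simpa using hd.2
    have core := core_main (u₁ := x.2 - (m.2:ℝ)*ℓ) (u₂ := x.1 - (m.1:ℝ)*ℓ)
      (γ₁ := (g m).2) (γ₂ := (g m).1) (δ₁ := (g m'').2) (δ₂ := (g m'').1)
      (gk := (g k).2)
      (b0 := A m 0) (b1 := A m 2) (b2 := A m 1) (b3 := A m 4) (b4 := A m 3)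
      (c0 := A m'' 0) (c1 := A m'' 2) (c2 := A m'' 1) (c3 := A m'' 4) (c4 := A m'' 3)
      hl hl9 hΓl hu2 hu1 hgk hgkm2 hd2 hd1 (self_dist hl hm hadj2 2 0)
      (hcij 0 0) (hcij 2 2) (hcij 1 1) (hcij 4 2) (hcij 3 3)
      (by linarith) (by linarith) (by linarith)
    have heq : mesa ℓ Γ (pt ℓ m) (A m) (g m) x = Pt ℓ Γ (pt ℓ m) (A m 2) (g m) x :=
      le_antisymm mesa_le_Pt hcon
    obtain ⟨C0, C1, C2, C3, C4⟩ := core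
    have e1 : ((m''.2 : ℕ):ℝ)*ℓ = (m.2:ℝ)*ℓ + ℓ := by
      rw [hm''def]; push_cast; ring
    have e2 : ((m''.1 : ℕ):ℝ)*ℓ = (m.1:ℝ)*ℓ := by rw [hm''def]
    have hgt : mesa ℓ Γ (pt ℓ m) (A m) (g m) x < mesa ℓ Γ (pt ℓ m'') (A m'') (g m'') x := by
      rw [heq]
      unfold mesa
      simp only [lt_min_iff]
      refine ⟨?_, ?_, ?_, ?_, ?_⟩
      · simp only [Pc, Pt, pt]; rw [e1, e2]; linarith [C0]
      · simp only [Pr, Pt, pt]; rw [e1, e2]; linarith [C2]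
      · simp only [Pt, pt]; rw [e1, e2]; linarith [C1]
      · simp only [Pl, Pt, pt]; rw [e1, e2]; linarith [C4]
      · simp only [Pb, Pt, pt]; rw [e1, e2]; linarith [C3]
    linarith [hub m'' hm'']
  -- growth and derivative
  have hD := hdiff.hasFDerivAt
  set ε := Pt ℓ Γ (pt ℓ m) (A m 2) (g m) x - mesa ℓ Γ (pt ℓ m) (A m) (g m) x with hεdef
  have hε : 0 < ε := by simp only [hεdef]; linarith
  have hΓ1 : (0:ℝ) < Γ + 1 := by linarith
  refine deriv_ge hD (div_pos hε hΓ1) ?_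
  intro t ht0 htδ
  have hy1 : (x + t • ((0:ℝ),(1:ℝ))).1 = x.1 := by simp
  have hy2 : (x + t • ((0:ℝ),(1:ℝ))).2 = x.2 + t := by simp
  have hfy : mesa ℓ Γ (pt ℓ m) (A m) (g m) (x + t • ((0:ℝ),(1:ℝ))) ≤ f (x + t • ((0:ℝ),(1:ℝ))) := by
    rw [hf]
    exact Finset.le_sup' (fun j => mesa ℓ Γ (pt ℓ j) (A j) (g j) (x + t • ((0:ℝ),(1:ℝ)))) hm
  have s1 : t*((g k).2 - ℓ) ≤ t*(g m).2 := mul_le_mul_of_nonneg_left hγ1 ht0.le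
  have s3 : t*(Γ+1) ≤ ε := by
    have h1 : t*(Γ+1) < (ε/(Γ+1))*(Γ+1) := mul_lt_mul_of_pos_right htδ hΓ1
    rw [div_mul_cancel₀ _ (ne_of_gt hΓ1)] at h1
    exact h1.le
  have hmesay : mesa ℓ Γ (pt ℓ m) (A m) (g m) x + ((g k).2 - ℓ)*t ≤
      mesa ℓ Γ (pt ℓ m) (A m) (g m) (x + t • ((0:ℝ),(1:ℝ))) := by
    have c1 := mesa_le_Pc (ℓ := ℓ) (Γ := Γ) (p := pt ℓ m) (a := A m) (g := g m) (x := x)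
    have c2 := mesa_le_Pr (ℓ := ℓ) (Γ := Γ) (p := pt ℓ m) (a := A m) (g := g m) (x := x)
    have c3 := hinact
    have c4 := mesa_le_Pl (ℓ := ℓ) (Γ := Γ) (p := pt ℓ m) (a := A m) (g := g m) (x := x)
    have c5 := mesa_le_Pb (ℓ := ℓ) (Γ := Γ) (p := pt ℓ m) (a := A m) (g := g m) (x := x)
    simp only [Pc, Pr, Pt, Pl, Pb, pt] at c1 c2 c3 c4 c5
    have hs2 : t*((g k).2 - ℓ) ≤ t*(Γ + (g m).2) :=
      mul_le_mul_of_nonneg_left (by linarith [hγ2m.1]) ht0.le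
    have hs4 : t*(((g k).2 - ℓ) + Γ - (g m).2) ≤ t*(Γ+1) :=
      mul_le_mul_of_nonneg_left (by linarith [hγ2m.1]) ht0.le
    refine le_min ?_ (le_min ?_ (le_min ?_ (le_min ?_ ?_)))
    · simp only [Pc, pt]
      rw [hy1, hy2]
      linarith [c1, s1]
    · simp only [Pr, pt]
      rw [hy1, hy2]
      linarith [c2, s1]
    · have hPteq : Pt ℓ Γ (pt ℓ m) (A m 2) (g m) x
          = (x.1 - (m.1:ℝ)*ℓ)*(g m).1 + (x.2 - (m.2:ℝ)*ℓ)*(-Γ+(g m).2) + A m 2 + Γ*ℓ/2 := by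
        simp only [Pt, pt]
      have hbr : mesa ℓ Γ (pt ℓ m) (A m) (g m) x
          = mesa ℓ Γ ((m.1:ℝ)*ℓ, (m.2:ℝ)*ℓ) (A m) (g m) x := rfl
      simp only [Pt, pt]
      rw [hy1, hy2]
      linarith [hs4, s3, hεdef, hPteq, hbr]
    · simp only [Pl, pt]
      rw [hy1, hy2]
      linarith [c4, s1]
    · simp only [Pb, pt]
      rw [hy1, hy2]
      linarith [c5, hs2]
  rw [hfx]
  linarith [hmesay, hfy]

set_option maxHeartbeats 1600000 in
lemma dir4 {N : ℕ} {ℓ Γ : ℝ} (hl : 0 < ℓ) (hl1 : ℓ ≤ 1) (hNl : (N:ℝ)*ℓ = 1) (hΓl : 6 ≤ Γ*ℓ)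
    {A : ℕ×ℕ → Fin 5 → ℝ} {g : ℕ×ℕ → ℝ×ℝ}
    (hA : ∀ j ∈ grid N, ∀ i, A j i ∈ Set.Icc (0.4:ℝ) 0.6)
    (hgab : ∀ j ∈ grid N, |(g j).1| ≤ 0.01 ∧ |(g j).2| ≤ 0.01)
    (hadj1 : ∀ k ∈ grid N, ∀ k' ∈ grid N, ‖pt ℓ k - pt ℓ k'‖ ≤ ℓ → ‖g k - g k'‖ ≤ ℓ)
    (hadj2 : ∀ k ∈ grid N, ∀ k' ∈ grid N, ‖pt ℓ k - pt ℓ k'‖ ≤ ℓ → ∀ i j : Fin 5,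
      |A k' i - A k j
        - (2 * (g k).1 * ((pt ℓ k').1 - (pt ℓ k).1) + 2 * (g k).2 * ((pt ℓ k').2 - (pt ℓ k).2))|
        ≤ ℓ ^ 2)
    {f : ℝ×ℝ → ℝ}
    (hf : ∀ y, f y = (grid N).sup' (grid_nonempty N) fun j => mesa ℓ Γ (pt ℓ j) (A j) (g j) y)
    {k : ℕ×ℕ} (hk : k ∈ grid N) {x : ℝ×ℝ}
    (hx1 : x.1 ∈ Set.Icc (0:ℝ) 1) (hx2 : x.2 ∈ Set.Icc (0:ℝ) 1)
    (hxp : ‖x - pt ℓ k‖ ≤ ℓ/2)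
    (hdiff : DifferentiableAt ℝ f x)
    (hgk : 10*ℓ ≤ -(g k).2) :
    -(g k).2 - ℓ ≤ fderiv ℝ f x (0, -1) := by
  have hΓ0 : (0:ℝ) < Γ := by nlinarith
  obtain ⟨m, hm, hfm⟩ := Finset.exists_mem_eq_sup' (grid_nonempty N)
    (fun j => mesa ℓ Γ (pt ℓ j) (A j) (g j) x)
  have hfx : f x = mesa ℓ Γ (pt ℓ m) (A m) (g m) x := by rw [hf x, hfm]
  have hub : ∀ j ∈ grid N, mesa ℓ Γ (pt ℓ j) (A j) (g j) x ≤ mesa ℓ Γ (pt ℓ m) (A m) (g m) x := by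
    intro j hj
    have h := Finset.le_sup' (fun j => mesa ℓ Γ (pt ℓ j) (A j) (g j) x) hj
    rw [hfm] at h
    exact h
  have hnb : ‖pt ℓ m - pt ℓ k‖ ≤ ℓ :=
    maximizer_neighbor hl hl1 hNl hΓl hA hgab hk hm hx1 hx2 hxp (hub k hk)
  have hnbc := norm_coords hnb
  have hnb1 : |(m.1:ℝ)*ℓ - (k.1:ℝ)*ℓ| ≤ ℓ := by simpa [pt] using hnbc.1
  have hnb2 : |(m.2:ℝ)*ℓ - (k.2:ℝ)*ℓ| ≤ ℓ := by simpa [pt] using hnbc.2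
  have hxc := norm_coords hxp
  have hxc1 : |x.1 - (k.1:ℝ)*ℓ| ≤ ℓ/2 := by simpa [pt] using hxc.1
  have hxc2 : |x.2 - (k.2:ℝ)*ℓ| ≤ ℓ/2 := by simpa [pt] using hxc.2
  have hu1 : |x.1 - (m.1:ℝ)*ℓ| ≤ 3*ℓ/2 := by
    have h1 := abs_le.1 hnb1; have h2 := abs_le.1 hxc1
    rw [abs_le]; constructor <;> linarith [h1.1, h1.2, h2.1, h2.2]
  have hu2 : |x.2 - (m.2:ℝ)*ℓ| ≤ 3*ℓ/2 := by
    have h1 := abs_le.1 hnb2; have h2 := abs_le.1 hxc2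
    rw [abs_le]; constructor <;> linarith [h1.1, h1.2, h2.1, h2.2]
  have hu2' : |(m.2:ℝ)*ℓ - x.2| ≤ 3*ℓ/2 := by rw [abs_sub_comm]; exact hu2
  have hgkm : ‖g k - g m‖ ≤ ℓ := hadj1 k hk m hm (by rwa [norm_sub_rev])
  have hgkmc := norm_coords hgkm
  have hgkm1 : |(g m).1 - (g k).1| ≤ ℓ := by
    rw [abs_sub_comm]; simpa using hgkmc.1
  have hgkm2 : |(g m).2 - (g k).2| ≤ ℓ := by
    rw [abs_sub_comm]; simpa using hgkmc.2
  have hgkm2n : |(-(g m).2) - (-(g k).2)| ≤ ℓ := by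
    rw [show -(g m).2 - -(g k).2 = -((g m).2 - (g k).2) by ring, abs_neg]; exact hgkm2
  have hgkb := hgab k hk
  have hl9 : ℓ ≤ 1/900 := by
    have h1 := (abs_le.1 hgkb.2).1
    norm_num at h1; linarith
  have hγ2m := abs_le.1 hgkm2
  have hγ1 : -(g k).2 - ℓ ≤ -(g m).2 := by linarith [hγ2m.2]
  -- the inactivity of the bottom piece
  have hinact : mesa ℓ Γ (pt ℓ m) (A m) (g m) x < Pb ℓ Γ (pt ℓ m) (A m 4) (g m) x := by
    by_contra hcon
    push_neg at hcon
    have hPc := hcon.trans (mesa_le_Pc (ℓ := ℓ) (Γ := Γ))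
    have hPr := hcon.trans (mesa_le_Pr (ℓ := ℓ) (Γ := Γ))
    have hPl := hcon.trans (mesa_le_Pl (ℓ := ℓ) (Γ := Γ))
    simp only [Pb, Pc, Pr, Pl, pt] at hPc hPr hPl
    have hb10 := self_dist hl hm hadj2 4 0
    have hpos : ℓ/3 ≤ (m.2:ℝ)*ℓ - x.2 :=
      core_pos (γ₁ := -(g m).2) hl hl9 hΓl hb10 (by linarith)
    have hm21 : 1 ≤ m.2 := by
      rcases Nat.eq_zero_or_pos m.2 with h0 | h0
      · exfalso
        have hz : ((m.2:ℕ):ℝ) = 0 := by rw [h0]; norm_num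
        rw [hz] at hpos
        have := hx2.1
        linarith
      · exact h0
    have hcast : ((m.2 - 1 : ℕ):ℝ) = (m.2:ℝ) - 1 := by
      rw [Nat.cast_sub hm21]; norm_num
    set m'' : ℕ×ℕ := (m.1, m.2 - 1) with hm''def
    have hm'' : m'' ∈ grid N := by
      have h1 := (mem_grid hm).1
      have h2 := (mem_grid hm).2
      simp only [grid, Finset.mem_product, Finset.mem_range, hm''def]
      exact ⟨by omega, by omega⟩
    have hptd : pt ℓ m'' - pt ℓ m = (0, -ℓ) := by
      simp only [pt, hm''def, Prod.mk_sub_mk, Prod.mk.injEq]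
      constructor
      · ring
      · rw [hcast]; ring
    have hdist : ‖pt ℓ m - pt ℓ m''‖ ≤ ℓ := by
      rw [norm_sub_rev, hptd, Prod.norm_def]
      simp [abs_of_pos hl, hl.le]
    have hcij : ∀ i j : Fin 5, |A m'' i - A m j - 2*(-(g m).2)*ℓ| ≤ ℓ^2 := by
      intro i j
      have h := hadj2 m hm m'' hm'' hdist i j
      have e1 : (pt ℓ m'').1 - (pt ℓ m).1 = 0 := by
        have := congrArg Prod.fst hptd; simpa using this
      have e2 : (pt ℓ m'').2 - (pt ℓ m).2 = -ℓ := by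
        have := congrArg Prod.snd hptd; simpa using this
      rw [e1, e2] at h
      have he : A m'' i - A m j - (2 * (g m).1 * 0 + 2 * (g m).2 * (-ℓ))
          = A m'' i - A m j - 2*(-(g m).2)*ℓ := by ring
      rwa [he] at h
    have hd := norm_coords (hadj1 m hm m'' hm'' hdist)
    have hd1 : |(g m'').1 - (g m).1| ≤ ℓ := by rw [abs_sub_comm]; simpa using hd.1
    have hd2 : |(g m'').2 - (g m).2| ≤ ℓ := by rw [abs_sub_comm]; simpa using hd.2
    have hd2n : |(-(g m'').2) - (-(g m).2)| ≤ ℓ := by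
      rw [show -(g m'').2 - -(g m).2 = -((g m'').2 - (g m).2) by ring, abs_neg]; exact hd2
    have core := core_main (u₁ := (m.2:ℝ)*ℓ - x.2) (u₂ := x.1 - (m.1:ℝ)*ℓ)
      (γ₁ := -(g m).2) (γ₂ := (g m).1) (δ₁ := -(g m'').2) (δ₂ := (g m'').1)
      (gk := -(g k).2)
      (b0 := A m 0) (b1 := A m 4) (b2 := A m 1) (b3 := A m 2) (b4 := A m 3)
      (c0 := A m'' 0) (c1 := A m'' 4) (c2 := A m'' 1) (c3 := A m'' 2) (c4 := A m'' 3)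
      hl hl9 hΓl hu2' hu1 hgk hgkm2n hd2n hd1 (self_dist hl hm hadj2 4 0)
      (hcij 0 0) (hcij 4 4) (hcij 1 1) (hcij 2 4) (hcij 3 3)
      (by linarith) (by linarith) (by linarith)
    have heq : mesa ℓ Γ (pt ℓ m) (A m) (g m) x = Pb ℓ Γ (pt ℓ m) (A m 4) (g m) x :=
      le_antisymm mesa_le_Pb hcon
    obtain ⟨C0, C1, C2, C3, C4⟩ := core
    have e1 : ((m''.2 : ℕ):ℝ)*ℓ = (m.2:ℝ)*ℓ - ℓ := by
      rw [hm''def]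
      show ((m.2 - 1 : ℕ):ℝ)*ℓ = (m.2:ℝ)*ℓ - ℓ
      rw [hcast]; ring
    have e2 : ((m''.1 : ℕ):ℝ)*ℓ = (m.1:ℝ)*ℓ := by rw [hm''def]
    have hgt : mesa ℓ Γ (pt ℓ m) (A m) (g m) x < mesa ℓ Γ (pt ℓ m'') (A m'') (g m'') x := by
      rw [heq]
      unfold mesa
      simp only [lt_min_iff]
      refine ⟨?_, ?_, ?_, ?_, ?_⟩
      · simp only [Pc, Pb, pt]; rw [e1, e2]; linarith [C0]
      · simp only [Pr, Pb, pt]; rw [e1, e2]; linarith [C2]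
      · simp only [Pt, Pb, pt]; rw [e1, e2]; linarith [C3]
      · simp only [Pl, Pb, pt]; rw [e1, e2]; linarith [C4]
      · simp only [Pb, pt]; rw [e1, e2]; linarith [C1]
    linarith [hub m'' hm'']
  -- growth and derivative
  have hD := hdiff.hasFDerivAt
  set ε := Pb ℓ Γ (pt ℓ m) (A m 4) (g m) x - mesa ℓ Γ (pt ℓ m) (A m) (g m) x with hεdef
  have hε : 0 < ε := by simp only [hεdef]; linarith
  have hΓ1 : (0:ℝ) < Γ + 1 := by linarith
  refine deriv_ge hD (div_pos hε hΓ1) ?_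
  intro t ht0 htδ
  have hy1 : (x + t • ((0:ℝ),(-1:ℝ))).1 = x.1 := by simp
  have hy2 : (x + t • ((0:ℝ),(-1:ℝ))).2 = x.2 - t := by
    simp only [Prod.snd_add, Prod.smul_snd, smul_eq_mul]; ring
  have hfy : mesa ℓ Γ (pt ℓ m) (A m) (g m) (x + t • ((0:ℝ),(-1:ℝ))) ≤ f (x + t • ((0:ℝ),(-1:ℝ))) := by
    rw [hf]
    exact Finset.le_sup' (fun j => mesa ℓ Γ (pt ℓ j) (A j) (g j) (x + t • ((0:ℝ),(-1:ℝ)))) hm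
  have s1 : t*(-(g k).2 - ℓ) ≤ t*(-(g m).2) := mul_le_mul_of_nonneg_left hγ1 ht0.le
  have s3 : t*(Γ+1) ≤ ε := by
    have h1 : t*(Γ+1) < (ε/(Γ+1))*(Γ+1) := mul_lt_mul_of_pos_right htδ hΓ1
    rw [div_mul_cancel₀ _ (ne_of_gt hΓ1)] at h1
    exact h1.le
  have hmesay : mesa ℓ Γ (pt ℓ m) (A m) (g m) x + (-(g k).2 - ℓ)*t ≤
      mesa ℓ Γ (pt ℓ m) (A m) (g m) (x + t • ((0:ℝ),(-1:ℝ))) := by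
    have c1 := mesa_le_Pc (ℓ := ℓ) (Γ := Γ) (p := pt ℓ m) (a := A m) (g := g m) (x := x)
    have c2 := mesa_le_Pr (ℓ := ℓ) (Γ := Γ) (p := pt ℓ m) (a := A m) (g := g m) (x := x)
    have c3 := mesa_le_Pt (ℓ := ℓ) (Γ := Γ) (p := pt ℓ m) (a := A m) (g := g m) (x := x)
    have c4 := mesa_le_Pl (ℓ := ℓ) (Γ := Γ) (p := pt ℓ m) (a := A m) (g := g m) (x := x)
    have c5 := hinact
    simp only [Pc, Pr, Pt, Pl, Pb, pt] at c1 c2 c3 c4 c5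
    have hs2 : t*(-(g k).2 - ℓ) ≤ t*(Γ - (g m).2) :=
      mul_le_mul_of_nonneg_left (by linarith [hγ2m.2]) ht0.le
    have hs4 : t*((-(g k).2 - ℓ) + Γ + (g m).2) ≤ t*(Γ+1) :=
      mul_le_mul_of_nonneg_left (by linarith [hγ2m.2]) ht0.le
    refine le_min ?_ (le_min ?_ (le_min ?_ (le_min ?_ ?_)))
    · simp only [Pc, pt]
      rw [hy1, hy2]
      linarith [c1, s1]
    · simp only [Pr, pt]
      rw [hy1, hy2]
      linarith [c2, s1]
    · simp only [Pt, pt]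
      rw [hy1, hy2]
      linarith [c3, hs2]
    · simp only [Pl, pt]
      rw [hy1, hy2]
      linarith [c4, s1]
    · have hPbeq : Pb ℓ Γ (pt ℓ m) (A m 4) (g m) x
          = (x.1 - (m.1:ℝ)*ℓ)*(g m).1 + (x.2 - (m.2:ℝ)*ℓ)*(Γ+(g m).2) + A m 4 + Γ*ℓ/2 := by
        simp only [Pb, pt]
      have hbr : mesa ℓ Γ (pt ℓ m) (A m) (g m) x
          = mesa ℓ Γ ((m.1:ℝ)*ℓ, (m.2:ℝ)*ℓ) (A m) (g m) x := rfl
      simp only [Pb, pt]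
      rw [hy1, hy2]
      linarith [hs4, s3, hεdef, hPbeq, hbr]
  rw [hfx]
  linarith [hmesay, hfy]

/-- No bad gradients from the mesa construction.  The norm on `ℝ × ℝ` is the sup-norm, and
`fderiv ℝ f x (1,0)`, `fderiv ℝ f x (0,1)` are the two partial derivatives of `f` at `x`. -/
theorem mesa_no_bad_gradients (N : ℕ) (hN : 0 < N) (ℓ : ℝ) (hℓ : ℓ = 1 / N)
    (Γ : ℝ) (hΓ : 6 / ℓ ≤ Γ)
    (A : ℕ × ℕ → Fin 5 → ℝ) (hA : ∀ k ∈ grid N, ∀ i, A k i ∈ Set.Icc (0.4 : ℝ) 0.6)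
    (g : ℕ × ℕ → ℝ × ℝ)
    (hg : ∀ k ∈ grid N, (g k).1 ∈ Set.Icc (-0.01 : ℝ) 0.01 ∧ (g k).2 ∈ Set.Icc (-0.01 : ℝ) 0.01)
    (hadj1 : ∀ k ∈ grid N, ∀ k' ∈ grid N, ‖pt ℓ k - pt ℓ k'‖ ≤ ℓ → ‖g k - g k'‖ ≤ ℓ)
    (hadj2 : ∀ k ∈ grid N, ∀ k' ∈ grid N, ‖pt ℓ k - pt ℓ k'‖ ≤ ℓ → ∀ i j : Fin 5,
      |A k' i - A k j
        - (2 * (g k).1 * ((pt ℓ k').1 - (pt ℓ k).1) + 2 * (g k).2 * ((pt ℓ k').2 - (pt ℓ k).2))|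
        ≤ ℓ ^ 2)
    (f : ℝ × ℝ → ℝ)
    (hf : ∀ x, f x = (grid N).sup' (grid_nonempty N) fun k => mesa ℓ Γ (pt ℓ k) (A k) (g k) x)
    (k : ℕ × ℕ) (hk : k ∈ grid N)
    (x : ℝ × ℝ) (hx : x.1 ∈ Set.Icc (0 : ℝ) 1 ∧ x.2 ∈ Set.Icc (0 : ℝ) 1)
    (hxp : ‖x - pt ℓ k‖ ≤ ℓ / 2)
    (hdiff : DifferentiableAt ℝ f x) :
    (10 * ℓ ≤ (g k).1 → (g k).1 - ℓ ≤ fderiv ℝ f x (1, 0)) ∧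
    ((g k).1 ≤ -(10 * ℓ) → fderiv ℝ f x (1, 0) ≤ (g k).1 + ℓ) ∧
    (10 * ℓ ≤ (g k).2 → (g k).2 - ℓ ≤ fderiv ℝ f x (0, 1)) ∧
    ((g k).2 ≤ -(10 * ℓ) → fderiv ℝ f x (0, 1) ≤ (g k).2 + ℓ) := by
  have hl : 0 < ℓ := by
    rw [hℓ]
    positivity
  have hNl : (N:ℝ)*ℓ = 1 := by
    rw [hℓ]
    field_simp
  have hl1 : ℓ ≤ 1 := by
    nlinarith [Nat.one_le_cast (α := ℝ).2 hN]
  have hΓl : 6 ≤ Γ*ℓ := by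
    have h1 : (6/ℓ)*ℓ ≤ Γ*ℓ := mul_le_mul_of_nonneg_right hΓ hl.le
    rwa [div_mul_cancel₀ _ (ne_of_gt hl)] at h1
  have hgab : ∀ j ∈ grid N, |(g j).1| ≤ 0.01 ∧ |(g j).2| ≤ 0.01 := by
    intro j hj
    obtain ⟨h1, h2⟩ := hg j hj
    exact ⟨abs_le.2 ⟨h1.1, h1.2⟩, abs_le.2 ⟨h2.1, h2.2⟩⟩
  refine ⟨?_, ?_, ?_, ?_⟩
  · intro h
    exact dir1 hl hl1 hNl hΓl hA hgab hadj1 hadj2 hf hk hx.1 hx.2 hxp hdiff h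
  · intro h
    have h2 := dir2 hl hl1 hNl hΓl hA hgab hadj1 hadj2 hf hk hx.1 hx.2 hxp hdiff
      (by linarith)
    have he : ((-1, 0) : ℝ×ℝ) = -((1, 0) : ℝ×ℝ) := by
      rw [Prod.ext_iff]
      norm_num
    rw [he, map_neg] at h2
    linarith
  · intro h
    exact dir3 hl hl1 hNl hΓl hA hgab hadj1 hadj2 hf hk hx.1 hx.2 hxp hdiff h
  · intro h
    have h2 := dir4 hl hl1 hNl hΓl hA hgab hadj1 hadj2 hf hk hx.1 hx.2 hxp hdiff
      (by linarith)
    have he : ((0, -1) : ℝ×ℝ) = -((0, 1) : ℝ×ℝ) := by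
      rw [Prod.ext_iff]
      norm_num
    rw [he, map_neg] at h2
    linarith
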